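/- The form f = (1/2)(z³ + 2xyz + x²y)² + M(x,y,z), where M is the Motzkin form, is not a sum of squares of real forms of degree 3. -/

import Mathlib

open MvPolynomial

/-- The Motzkin form. -/
noncomputable def Motzkin : MvPolynomial (Fin 3) ℝ :=
  X 0 ^ 4 * X 1 ^ 2 + X 0 ^ 2 * X 1 ^ 4 - 3 * (X 0 ^ 2 * X 1 ^ 2 * X 2 ^ 2) + X 2 ^ 6

namespace MotzkinAux

/-- Exponent vectors in `Fin 3 →₀ ℕ`. -/
noncomputable def E (a b c : ℕ) : Fin 3 →₀ ℕ :=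
  Finsupp.single 0 a + Finsupp.single 1 b + Finsupp.single 2 c

lemma E_apply0 (a b c : ℕ) : E a b c 0 = a := by simp [E]
lemma E_apply1 (a b c : ℕ) : E a b c 1 = b := by simp [E]
lemma E_apply2 (a b c : ℕ) : E a b c 2 = c := by simp [E]

lemma eq_E (f : Fin 3 →₀ ℕ) : f = E (f 0) (f 1) (f 2) := by
  ext j; fin_cases j <;> simp [E]

lemma degree_E (a b c : ℕ) : (E a b c).degree = a + b + c := by
  rw [Finsupp.degree_eq_weight_one]
  simp [E, Finsupp.weight_apply, Finsupp.sum_add_index, Finsupp.sum_single_index]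

/-- Explicit monomials. -/
noncomputable def mono (a b c : ℕ) (d : ℝ) : MvPolynomial (Fin 3) ℝ :=
  C d * X 0 ^ a * X 1 ^ b * X 2 ^ c

lemma mono_eq (a b c : ℕ) (d : ℝ) : mono a b c d = monomial (E a b c) d := by
  rw [mono, E, X_pow_eq_monomial, X_pow_eq_monomial, X_pow_eq_monomial, C_mul_monomial,
    monomial_mul, monomial_mul]
  simp [add_assoc]

lemma coeff_mono (a b c a' b' c' : ℕ) (d : ℝ) :
    coeff (E a' b' c') (mono a b c d) = if a = a' ∧ b = b' ∧ c = c' then d else 0 := by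
  rw [mono_eq, coeff_monomial]
  congr 1
  simp only [eq_iff_iff]
  constructor
  · intro h
    exact ⟨by rw [← E_apply0 a b c, h, E_apply0], by rw [← E_apply1 a b c, h, E_apply1],
       by rw [← E_apply2 a b c, h, E_apply2]⟩
  · rintro ⟨rfl, rfl, rfl⟩; rfl

lemma C3 : (C (3 : ℝ) : MvPolynomial (Fin 3) ℝ) = 3 := map_ofNat C 3
lemma C2 : (C (2 : ℝ) : MvPolynomial (Fin 3) ℝ) = 2 := map_ofNat C 2

/-- Normal form of the polynomial `f`. -/
lemma f_eq : C (1 / 2 : ℝ) * (X 2 ^ 3 + 2 * (X 0 * X 1 * X 2) + X 0 ^ 2 * X 1) ^ 2 + Motzkin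
    = mono 4 2 0 (3/2) + mono 2 4 0 1 + mono 0 0 6 (3/2) + mono 2 2 2 (-1)
      + mono 1 1 4 2 + mono 2 1 3 1 + mono 3 2 1 2 := by
  have h32 : (C ((3:ℝ)/2) : MvPolynomial (Fin 3) ℝ) = C (1/2) * 3 := by
    rw [← C3, ← C_mul]; norm_num
  have e : (2 : MvPolynomial (Fin 3) ℝ) * C ((1:ℝ)/2) = 1 := by
    rw [← C2, ← C_mul]; norm_num
  simp only [Motzkin, mono, h32, map_one, map_neg, C2]
  linear_combination (2*X 0^3*X 1^2*X 2 + 2*X 0^2*X 1^2*X 2^2 + X 0^2*X 1*X 2^3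
    + 2*X 0*X 1*X 2^4 - X 2^6 - X 0^4*X 1^2) * e

/-- The key coefficient computation for the square of a homogeneous cubic. -/
lemma sq_coeff (g : MvPolynomial (Fin 3) ℝ) (hg : g.IsHomogeneous 3)
    (m0 m1 m2 e0 e1 e2 : ℕ) (h0 : e0 + e0 = m0) (h1 : e1 + e1 = m1) (h2 : e2 + e2 = m2)
    (hz : ∀ a0 a1 a2, a0 + a1 + a2 = 3 → (m0-a0) + (m1-a1) + (m2-a2) = 3 →
      a0 ≤ m0 → a1 ≤ m1 → a2 ≤ m2 → ¬(a0 = e0 ∧ a1 = e1 ∧ a2 = e2) →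
      coeff (E a0 a1 a2) g * coeff (E (m0-a0) (m1-a1) (m2-a2)) g = 0) :
    coeff (E m0 m1 m2) (g ^ 2) = coeff (E e0 e1 e2) g ^ 2 := by
  classical
  rw [sq, coeff_mul]
  rw [show coeff (E e0 e1 e2) g ^ 2 = coeff (E e0 e1 e2) g * coeff (E e0 e1 e2) g from sq _]
  apply Finset.sum_eq_single_of_mem (E e0 e1 e2, E e0 e1 e2)
  · rw [Finset.HasAntidiagonal.mem_antidiagonal]
    ext j; fin_cases j <;> simp [E_apply0, E_apply1, E_apply2, h0, h1, h2]
  · rintro ⟨a, b⟩ hab hne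
    rw [Finset.HasAntidiagonal.mem_antidiagonal] at hab
    have ha0 : a 0 + b 0 = m0 := by
      have := congrFun (congrArg (DFunLike.coe) hab) 0
      simpa [E_apply0] using this
    have ha1 : a 1 + b 1 = m1 := by
      have := congrFun (congrArg (DFunLike.coe) hab) 1
      simpa [E_apply1] using this
    have ha2 : a 2 + b 2 = m2 := by
      have := congrFun (congrArg (DFunLike.coe) hab) 2
      simpa [E_apply2] using this
    by_cases hda : a 0 + a 1 + a 2 = 3
    · by_cases hdb : b 0 + b 1 + b 2 = 3
      · rw [eq_E a, eq_E b]
        have hb0 : b 0 = m0 - a 0 := by omega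
        have hb1 : b 1 = m1 - a 1 := by omega
        have hb2 : b 2 = m2 - a 2 := by omega
        rw [hb0, hb1, hb2]
        apply hz _ _ _ hda (by omega) (by omega) (by omega) (by omega)
        rintro ⟨he0, he1, he2⟩
        apply hne
        have hA : a = E e0 e1 e2 := by rw [eq_E a, he0, he1, he2]
        have hB : b = E e0 e1 e2 := by
          rw [eq_E b, hb0, hb1, hb2, he0, he1, he2,
            show m0 - e0 = e0 by omega, show m1 - e1 = e1 by omega, show m2 - e2 = e2 by omega]
        rw [hA, hB]
      · have : coeff b g = 0 := by
          apply hg.coeff_eq_zero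
          rw [eq_E b, degree_E]; omega
        simp [this]
    · have : coeff a g = 0 := by
        apply hg.coeff_eq_zero
        rw [eq_E a, degree_E]; omega
      simp [this]

lemma sos_zero {k : ℕ} (c : Fin k → ℝ) (h : ∑ i, c i ^ 2 = 0) (i : Fin k) : c i = 0 := by
  have := (Finset.sum_eq_zero_iff_of_nonneg (fun j _ => sq_nonneg (c j))).mp h i
    (Finset.mem_univ i)
  exact pow_eq_zero_iff two_ne_zero |>.mp this

end MotzkinAux

open MotzkinAux

/-- The form `f = (1/2)(z³ + 2xyz + x²y)² + M(x,y,z)` is not a sum of squares of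
real forms of degree 3. -/
theorem half_square_plus_motzkin_not_sos :
    ¬ ∃ (k : ℕ) (g : Fin k → MvPolynomial (Fin 3) ℝ),
      (∀ i, (g i).IsHomogeneous 3) ∧
      C (1 / 2 : ℝ) * (X 2 ^ 3 + 2 * (X 0 * X 1 * X 2) + X 0 ^ 2 * X 1) ^ 2 + Motzkin
        = ∑ i, (g i) ^ 2 := by
  rintro ⟨k, g, hhom, heq⟩
  rw [f_eq] at heq
  have hc : ∀ m0 m1 m2 : ℕ, coeff (E m0 m1 m2)
      (mono 4 2 0 (3/2) + mono 2 4 0 1 + mono 0 0 6 (3/2) + mono 2 2 2 (-1)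
        + mono 1 1 4 2 + mono 2 1 3 1 + mono 3 2 1 2)
      = coeff (E m0 m1 m2) (∑ i, (g i) ^ 2) := fun m0 m1 m2 => by rw [heq]
  have key : ∀ m0 m1 m2 e0 e1 e2 : ℕ, e0 + e0 = m0 → e1 + e1 = m1 → e2 + e2 = m2 →
      (∀ i : Fin k, ∀ a0 a1 a2, a0 + a1 + a2 = 3 → (m0-a0) + (m1-a1) + (m2-a2) = 3 →
        a0 ≤ m0 → a1 ≤ m1 → a2 ≤ m2 → ¬(a0 = e0 ∧ a1 = e1 ∧ a2 = e2) →
        coeff (E a0 a1 a2) (g i) * coeff (E (m0-a0) (m1-a1) (m2-a2)) (g i) = 0) →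
      coeff (E m0 m1 m2)
      (mono 4 2 0 (3/2) + mono 2 4 0 1 + mono 0 0 6 (3/2) + mono 2 2 2 (-1)
        + mono 1 1 4 2 + mono 2 1 3 1 + mono 3 2 1 2)
        = ∑ i, coeff (E e0 e1 e2) (g i) ^ 2 := by
    intro m0 m1 m2 e0 e1 e2 h0 h1 h2 hz
    rw [hc m0 m1 m2, coeff_sum]
    exact Finset.sum_congr rfl fun i _ =>
      sq_coeff (g i) (hhom i) m0 m1 m2 e0 e1 e2 h0 h1 h2 (hz i)
  -- step 1 : no x^3
  have z1 : ∀ i, coeff (E 3 0 0) (g i) = 0 := by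
    apply sos_zero
    have := key 6 0 0 3 0 0 rfl rfl rfl (fun i a0 a1 a2 => by omega)
    rw [← this]
    simp [coeff_mono]
  -- step 2 : no y^3
  have z2 : ∀ i, coeff (E 0 3 0) (g i) = 0 := by
    apply sos_zero
    have := key 0 6 0 0 3 0 rfl rfl rfl (fun i a0 a1 a2 => by omega)
    rw [← this]
    simp [coeff_mono]
  -- step 3 : no x^2 z
  have z3 : ∀ i, coeff (E 2 0 1) (g i) = 0 := by
    apply sos_zero
    have := key 4 0 2 2 0 1 rfl rfl rfl (fun i a0 a1 a2 h3 h3' l0 l1 l2 hne => by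
      have e1 : a1 = 0 := by omega
      subst e1
      interval_cases a0 <;> interval_cases a2 <;> first | omega | simp [z1 i])
    rw [← this]
    simp [coeff_mono]
  -- step 4 : no y^2 z
  have z4 : ∀ i, coeff (E 0 2 1) (g i) = 0 := by
    apply sos_zero
    have := key 0 4 2 0 2 1 rfl rfl rfl (fun i a0 a1 a2 h3 h3' l0 l1 l2 hne => by
      have e1 : a0 = 0 := by omega
      subst e1
      interval_cases a1 <;> interval_cases a2 <;> first | omega | simp [z2 i])
    rw [← this]
    simp [coeff_mono]
  -- step 5 : no x z^2
  have z5 : ∀ i, coeff (E 1 0 2) (g i) = 0 := by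
    apply sos_zero
    have := key 2 0 4 1 0 2 rfl rfl rfl (fun i a0 a1 a2 h3 h3' l0 l1 l2 hne => by
      have e1 : a1 = 0 := by omega
      subst e1
      interval_cases a0 <;> interval_cases a2 <;> first | omega | simp [z3 i])
    rw [← this]
    simp [coeff_mono]
  -- step 6 : no y z^2
  have z6 : ∀ i, coeff (E 0 1 2) (g i) = 0 := by
    apply sos_zero
    have := key 0 2 4 0 1 2 rfl rfl rfl (fun i a0 a1 a2 h3 h3' l0 l1 l2 hne => by
      have e1 : a0 = 0 := by omega
      subst e1
      interval_cases a1 <;> interval_cases a2 <;> first | omega | simp [z4 i])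
    rw [← this]
    simp [coeff_mono]
  -- final step : coefficient of x^2 y^2 z^2
  have final := key 2 2 2 1 1 1 rfl rfl rfl (fun i a0 a1 a2 h3 h3' l0 l1 l2 hne => by
    interval_cases a0 <;> interval_cases a1 <;> interval_cases a2 <;>
      first | omega | simp [z3 i, z4 i, z5 i, z6 i])
  rw [show coeff (E 2 2 2)
      (mono 4 2 0 (3/2) + mono 2 4 0 1 + mono 0 0 6 (3/2) + mono 2 2 2 (-1)
        + mono 1 1 4 2 + mono 2 1 3 1 + mono 3 2 1 2) = (-1 : ℝ) by simp [coeff_mono]] at final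
  have hge : (0:ℝ) ≤ ∑ i, coeff (E 1 1 1) (g i) ^ 2 :=
    Finset.sum_nonneg fun i _ => sq_nonneg _
  linarith [final, hge]
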